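/- Let p(x) = 1/(2x²) and h(x) = c₂ Φ̄(x) with c₂ = (1/(4Φ̄(√2)))·(1 + (1 + r(√3))/250). Then h(x)/p(x) attains its minimum over [1, √2] at an endpoint, and min(h(1)/p(1), h(√2)/p(√2)) > 1; consequently p(x) < h(x) for all x ∈ (1, √2). -/

import Mathlib

open MeasureTheory Real Set

noncomputable def phi (x : ℝ) : ℝ := Real.exp (-x^2/2) / Real.sqrt (2*Real.pi)
noncomputable def Phibar (x : ℝ) : ℝ := ∫ u in Set.Ioi x, phi u
noncomputable def mills (x : ℝ) : ℝ := phi x / Phibar x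
noncomputable def c1 : ℝ := 1 / (4 * Phibar (Real.sqrt 2))
noncomputable def c2 : ℝ := c1 * (1 + (1 + mills (Real.sqrt 3))/250)
noncomputable def h (x : ℝ) : ℝ := c2 * Phibar x
noncomputable def p (x : ℝ) : ℝ := 1 / (2 * x^2)

noncomputable def G (x : ℝ) : ℝ := Real.exp (-x^2/2)

lemma contG : Continuous G := by
  unfold G; continuity

lemma G_pos (x : ℝ) : 0 < G x := Real.exp_pos _

lemma integrableG : Integrable G := by
  have h := integrable_exp_neg_mul_sq (b := (1:ℝ)/2) (by norm_num)
  have : (fun x : ℝ => Real.exp (-(1/2) * x^2)) = G := by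
    funext x; unfold G; congr 1; ring
  rwa [this] at h

lemma integrable_uG : Integrable (fun u : ℝ => u * G u) := by
  have h := integrable_mul_exp_neg_mul_sq (b := (1:ℝ)/2) (by norm_num)
  have : (fun x : ℝ => x * Real.exp (-(1/2) * x^2)) = fun u => u * G u := by
    funext x; unfold G; congr 2; ring
  rwa [this] at h

lemma hasDerivAt_negG (u : ℝ) : HasDerivAt (fun v => -G v) (u * G u) u := by
  have h1 : HasDerivAt (fun v : ℝ => -v^2/2) (-u) u := by
    have := ((hasDerivAt_pow 2 u).fun_neg).div_const 2
    refine this.congr_deriv ?_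
    push_cast; ring
  have h2 := h1.exp
  have h3 := h2.fun_neg
  refine h3.congr_deriv ?_
  unfold G; ring

lemma integral_uG (a b : ℝ) : ∫ u in a..b, u * G u = G a - G b := by
  rw [intervalIntegral.integral_eq_sub_of_hasDerivAt (f := fun v => -G v)
    (fun u _ => hasDerivAt_negG u) ((continuous_id.mul contG).intervalIntegrable a b)]
  ring

lemma tail_uG (x : ℝ) : ∫ u in Ioi x, u * G u = G x := by
  have h := integral_Ioi_of_hasDerivAt_of_tendsto' (f := fun v => -G v)
    (f' := fun u => u * G u) (a := x) (m := 0)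
    (fun y _ => hasDerivAt_negG y) (integrable_uG.integrableOn) ?_
  · rw [h]; simp
  · have h1 : Filter.Tendsto (fun v : ℝ => -v^2/2) Filter.atTop Filter.atBot := by
      have h2 : Filter.Tendsto (fun v : ℝ => v^2 * (-1/2)) Filter.atTop Filter.atBot :=
        Filter.Tendsto.atTop_mul_const_of_neg (by norm_num) (Filter.tendsto_pow_atTop two_ne_zero)
      convert h2 using 2; ring
    have h3 := (Real.tendsto_exp_atBot.comp h1).neg
    simp only [neg_zero] at h3
    convert h3 using 2
    rfl

noncomputable def T (x : ℝ) : ℝ := ∫ u in Ioi x, G u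

lemma T_split {a b : ℝ} (hab : a ≤ b) : T a = (∫ u in a..b, G u) + T b := by
  rw [T, T, ← Ioc_union_Ioi_eq_Ioi hab,
    setIntegral_union (Ioc_disjoint_Ioi le_rfl) measurableSet_Ioi
      integrableG.integrableOn integrableG.integrableOn,
    intervalIntegral.integral_of_le hab]

lemma T_nonneg (x : ℝ) : 0 ≤ T x :=
  setIntegral_nonneg measurableSet_Ioi (fun u _ => (G_pos u).le)

lemma intG_pos {a b : ℝ} (hab : a < b) : 0 < ∫ u in a..b, G u :=
  intervalIntegral.intervalIntegral_pos_of_pos (contG.intervalIntegrable a b) G_pos hab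

lemma T_pos (x : ℝ) : 0 < T x := by
  have h := T_split (le_of_lt (lt_add_one x))
  have := intG_pos (lt_add_one x)
  have := T_nonneg (x+1)
  linarith [h]

lemma T_mills {x : ℝ} (hx : 0 < x) : x * T x ≤ G x := by
  have h1 : x * T x = ∫ u in Ioi x, x * G u := by
    rw [T, ← integral_const_mul]
  rw [h1, ← tail_uG x]
  apply setIntegral_mono_on (integrableG.integrableOn.const_mul x)
    integrable_uG.integrableOn measurableSet_Ioi
  intro u hu
  have : x ≤ u := le_of_lt hu
  nlinarith [G_pos u]

lemma hasDerivAt_T (x : ℝ) : HasDerivAt T (-G x) x := by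
  have heq : ∀ y, T y = T 0 - ∫ u in (0:ℝ)..y, G u := by
    intro y
    rcases le_or_gt 0 y with hy | hy
    · have := T_split hy; linarith
    · have := T_split hy.le
      rw [intervalIntegral.integral_symm] at this
      linarith
  have hftc : HasDerivAt (fun y => ∫ u in (0:ℝ)..y, G u) (G x) x :=
    intervalIntegral.integral_hasDerivAt_right (contG.intervalIntegrable 0 x)
      (contG.stronglyMeasurableAtFilter _ _) contG.continuousAt
  have h2 : HasDerivAt (fun y => T 0 - ∫ u in (0:ℝ)..y, G u) (-G x) x := hftc.const_sub (T 0)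
  exact h2.congr_of_eventuallyEq (Filter.Eventually.of_forall heq)

lemma sqrt2pi_pos : 0 < Real.sqrt (2*Real.pi) := Real.sqrt_pos.2 (by positivity)

lemma phi_eq (x : ℝ) : phi x = G x / Real.sqrt (2*Real.pi) := rfl

lemma phi_pos (x : ℝ) : 0 < phi x := div_pos (G_pos x) sqrt2pi_pos

lemma Phibar_eq (x : ℝ) : Phibar x = T x / Real.sqrt (2*Real.pi) := by
  rw [Phibar, T, ← integral_div]
  rfl

lemma Phibar_pos (x : ℝ) : 0 < Phibar x := by
  rw [Phibar_eq]; exact div_pos (T_pos x) sqrt2pi_pos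

lemma mills_pos (x : ℝ) : 0 < mills x := div_pos (phi_pos x) (Phibar_pos x)

lemma Phibar_mills {x : ℝ} (hx : 0 < x) : x * Phibar x ≤ phi x := by
  rw [Phibar_eq, phi_eq, ← mul_div_assoc]
  exact (div_le_div_iff_of_pos_right sqrt2pi_pos).2 (T_mills hx)

lemma mills_ge {x : ℝ} (hx : 0 < x) : x ≤ mills x := by
  rw [mills, le_div_iff₀ (Phibar_pos x), mul_comm]
  linarith [Phibar_mills hx]

lemma hasDerivAt_Phibar (x : ℝ) : HasDerivAt Phibar (-phi x) x := by
  have h := (hasDerivAt_T x).div_const (Real.sqrt (2*Real.pi))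
  have h2 : Phibar = fun y => T y / Real.sqrt (2*Real.pi) := funext Phibar_eq
  rw [h2, phi_eq]
  refine h.congr_deriv ?_
  ring

lemma hasDerivAt_phi (x : ℝ) : HasDerivAt phi (-(x * phi x)) x := by
  have h := (hasDerivAt_negG x).fun_neg.div_const (Real.sqrt (2*Real.pi))
  have h4 : HasDerivAt phi (-(x * G x) / Real.sqrt (2*Real.pi)) x :=
    h.congr_of_eventuallyEq (Filter.Eventually.of_forall (fun y => by rw [phi_eq]; ring))
  convert h4 using 1
  rw [phi_eq]; ring

lemma sqrt2_lb : (14142/10000 : ℝ) ≤ Real.sqrt 2 := by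
  rw [show (14142/10000:ℝ) = Real.sqrt ((14142/10000)^2) from (Real.sqrt_sq (by norm_num)).symm]
  exact Real.sqrt_le_sqrt (by norm_num)

lemma sqrt2_ub : Real.sqrt 2 ≤ (141422/100000 : ℝ) := by
  rw [show (141422/100000:ℝ) = Real.sqrt ((141422/100000)^2) from (Real.sqrt_sq (by norm_num)).symm]
  exact Real.sqrt_le_sqrt (by norm_num)

lemma sqrt3_lb : (433/250 : ℝ) ≤ Real.sqrt 3 := by
  rw [show (433/250:ℝ) = Real.sqrt ((433/250)^2) from (Real.sqrt_sq (by norm_num)).symm]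
  exact Real.sqrt_le_sqrt (by norm_num)

lemma sq_sqrt2 : Real.sqrt 2 ^ 2 = 2 := Real.sq_sqrt (by norm_num)

lemma G_sqrt2 : G (Real.sqrt 2) = Real.exp (-1) := by
  rw [G, sq_sqrt2]; norm_num

lemma int_G_lb {a b : ℝ} (ha : 0 < a) (hab : a ≤ b) :
    (G a - G b) / b ≤ ∫ u in a..b, G u := by
  have hb : 0 < b := lt_of_lt_of_le ha hab
  rw [div_le_iff₀ hb, ← integral_uG a b, ← intervalIntegral.integral_mul_const]
  apply intervalIntegral.integral_mono_on hab ((continuous_id.mul contG).intervalIntegrable _ _)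
    ((contG.mul continuous_const).intervalIntegrable _ _) ?_
  intro u hu
  simp only [Pi.mul_apply, id_eq]
  have h1 : u ≤ b := hu.2
  nlinarith [G_pos u]

lemma int_G_ub {a b : ℝ} (ha : 0 < a) (hab : a ≤ b) :
    (∫ u in a..b, G u) ≤ (G a - G b) / a := by
  rw [le_div_iff₀ ha, ← integral_uG a b, ← intervalIntegral.integral_mul_const]
  apply intervalIntegral.integral_mono_on hab ((contG.mul continuous_const).intervalIntegrable _ _)
    ((continuous_id.mul contG).intervalIntegrable _ _) ?_
  intro u hu
  simp only [Pi.mul_apply, id_eq]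
  have h1 : a ≤ u := hu.1
  nlinarith [G_pos u]

lemma G_split (m t : ℝ) : G (m + t) = G m * (Real.exp (-(m*t)) * Real.exp (-(t^2/2))) := by
  rw [G, G, ← Real.exp_add, ← Real.exp_add]
  congr 1
  ring

lemma mid_lb {m d : ℝ} (hm : 0 ≤ m) (hd : 0 ≤ d) (h1 : m * d ≤ 1) (h2 : d^2 ≤ 2) :
    G m * (2*d - d^3/3) ≤ ∫ u in (m-d)..(m+d), G u := by
  have hab : m - d ≤ m + d := by linarith
  have hpt : ∀ u ∈ Icc (m-d) (m+d),
      G m * (1 - m*(u-m) - (u-m)^2/2 + m*(u-m)^3/2) ≤ G u := by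
    intro u hu
    have hl : m - d ≤ u := hu.1
    have hr : u ≤ m + d := hu.2
    have e1 : 1 - m*(u-m) ≤ Real.exp (-(m*(u-m))) := by
      have := Real.add_one_le_exp (-(m*(u-m))); linarith
    have e2 : 1 - (u-m)^2/2 ≤ Real.exp (-((u-m)^2/2)) := by
      have := Real.add_one_le_exp (-((u-m)^2/2)); linarith
    have p1 : 0 ≤ 1 - m*(u-m) := by nlinarith
    have p2 : 0 ≤ 1 - (u-m)^2/2 := by nlinarith
    have hGu : G u = G m * (Real.exp (-(m*(u-m))) * Real.exp (-((u-m)^2/2))) := by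
      have := G_split m (u - m)
      simpa using this
    rw [hGu]
    have hmul := mul_le_mul e1 e2 p2 (Real.exp_nonneg _)
    have hGm := (G_pos m).le
    nlinarith [hmul]
  have hder : ∀ u : ℝ, HasDerivAt
      (fun u => G m * (u - m - m*(u-m)^2/2 - (u-m)^3/6 + m*(u-m)^4/8))
      (G m * (1 - m*(u-m) - (u-m)^2/2 + m*(u-m)^3/2)) u := by
    intro u
    have h0 : HasDerivAt (fun u : ℝ => u - m) 1 u := (hasDerivAt_id u).sub_const m
    have hh := ((((h0.fun_sub (((h0.fun_pow 2).const_mul m).div_const 2)).fun_sub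
      ((h0.fun_pow 3).div_const 6)).fun_add (((h0.fun_pow 4).const_mul m).div_const 8)).const_mul (G m))
    refine hh.congr_deriv ?_
    push_cast
    ring
  have hval : ∫ u in (m-d)..(m+d), G m * (1 - m*(u-m) - (u-m)^2/2 + m*(u-m)^3/2)
      = G m * (2*d - d^3/3) := by
    rw [intervalIntegral.integral_eq_sub_of_hasDerivAt (fun u _ => hder u)
      (Continuous.intervalIntegrable (by fun_prop) _ _)]
    ring
  rw [← hval]
  exact intervalIntegral.integral_mono_on hab
    (Continuous.intervalIntegrable (by fun_prop) _ _)
    (contG.intervalIntegrable _ _) hpt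

lemma exp_quartic_ub {x : ℝ} (hx : |x| ≤ 1) :
    Real.exp x ≤ 1 + x + x^2/2 + x^3/6 + x^4*(5/96) := by
  have h := Real.exp_bound hx (n := 4) (by norm_num)
  rw [abs_le] at h
  have h2 := h.2
  have hs : ∑ i ∈ Finset.range 4, x^i/(Nat.factorial i) = 1 + x + x^2/2 + x^3/6 := by
    simp [Finset.sum_range_succ, Nat.factorial]
  have habs : |x|^4 = x^4 := by
    rw [← abs_pow, abs_of_nonneg (by positivity)]
  rw [hs, habs] at h2
  norm_num [Nat.factorial] at h2
  linarith

lemma mid_ub {m d : ℝ} (hm : 0 ≤ m) (hd : 0 ≤ d) (h1 : m * d ≤ 1) :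
    ∫ u in (m-d)..(m+d), G u ≤ G m * (2*d + m^2*d^3/3 + m^4*d^5/48) := by
  have hab : m - d ≤ m + d := by linarith
  have hpt : ∀ u ∈ Icc (m-d) (m+d),
      G u ≤ G m * (1 - m*(u-m) + (m*(u-m))^2/2 - (m*(u-m))^3/6 + (m*(u-m))^4*(5/96)) := by
    intro u hu
    have hGu : G u = G m * (Real.exp (-(m*(u-m))) * Real.exp (-((u-m)^2/2))) := by
      have := G_split m (u-m); simpa using this
    have habs : |(-(m*(u-m)))| ≤ 1 := by
      rw [abs_neg, abs_mul, abs_of_nonneg hm]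
      have : |u - m| ≤ d := abs_le.2 ⟨by linarith [hu.1], by linarith [hu.2]⟩
      nlinarith
    have he := exp_quartic_ub habs
    have he2 : Real.exp (-((u-m)^2/2)) ≤ 1 := by
      rw [Real.exp_le_one_iff]
      nlinarith [sq_nonneg (u-m)]
    have hp1 := Real.exp_nonneg (-(m*(u-m)))
    have hp2 := Real.exp_nonneg (-((u-m)^2/2))
    have hGm := (G_pos m).le
    rw [hGu]
    have key : Real.exp (-(m*(u-m))) * Real.exp (-((u-m)^2/2))
        ≤ 1 - m*(u-m) + (m*(u-m))^2/2 - (m*(u-m))^3/6 + (m*(u-m))^4*(5/96) := by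
      calc Real.exp (-(m*(u-m))) * Real.exp (-((u-m)^2/2)) ≤ Real.exp (-(m*(u-m))) * 1 :=
            mul_le_mul_of_nonneg_left he2 hp1
        _ = Real.exp (-(m*(u-m))) := mul_one _
        _ ≤ 1 - m*(u-m) + (m*(u-m))^2/2 - (m*(u-m))^3/6 + (m*(u-m))^4*(5/96) := by
            have := he; nlinarith [he]
    exact mul_le_mul_of_nonneg_left key hGm
  have hder : ∀ u : ℝ, HasDerivAt
      (fun u => G m * (u - m - m*(u-m)^2/2 + m^2*(u-m)^3/6 - m^3*(u-m)^4/24 + m^4*(u-m)^5/96))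
      (G m * (1 - m*(u-m) + (m*(u-m))^2/2 - (m*(u-m))^3/6 + (m*(u-m))^4*(5/96))) u := by
    intro u
    have h0 : HasDerivAt (fun u : ℝ => u - m) 1 u := (hasDerivAt_id u).sub_const m
    have hh := (((((h0.fun_sub (((h0.fun_pow 2).const_mul m).div_const 2)).fun_add
      (((h0.fun_pow 3).const_mul (m^2)).div_const 6)).fun_sub
      (((h0.fun_pow 4).const_mul (m^3)).div_const 24)).fun_add
      (((h0.fun_pow 5).const_mul (m^4)).div_const 96)).const_mul (G m))
    refine hh.congr_deriv ?_
    push_cast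
    ring
  have hval : ∫ u in (m-d)..(m+d),
      G m * (1 - m*(u-m) + (m*(u-m))^2/2 - (m*(u-m))^3/6 + (m*(u-m))^4*(5/96))
      = G m * (2*d + m^2*d^3/3 + m^4*d^5/48) := by
    rw [intervalIntegral.integral_eq_sub_of_hasDerivAt (fun u _ => hder u)
      (Continuous.intervalIntegrable (by fun_prop) _ _)]
    ring
  rw [← hval]
  exact intervalIntegral.integral_mono_on hab (contG.intervalIntegrable _ _)
    (Continuous.intervalIntegrable (by fun_prop) _ _) hpt

lemma exp_sq {x l u : ℝ} (h0 : 0 ≤ l) (hl : l ≤ Real.exp x) (hu : Real.exp x ≤ u) :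
    l^2 ≤ Real.exp (2*x) ∧ Real.exp (2*x) ≤ u^2 := by
  rw [show (2:ℝ)*x = x + x by ring, Real.exp_add]
  constructor
  · rw [pow_two]; exact mul_le_mul hl hl h0 (Real.exp_nonneg _)
  · rw [pow_two]; exact mul_le_mul hu hu (Real.exp_nonneg _) (le_trans (Real.exp_nonneg _) hu)


lemma bA : (682593/1250000 : ℝ) ≤ Real.exp (-(121/200)) ∧
    Real.exp (-(121/200)) ≤ (1092149/2000000 : ℝ) := by
  have h := Real.exp_bound (x := (-(121/200):ℝ)) (by rw [abs_le]; constructor <;> norm_num)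
    (n := 10) (by norm_num)
  have habs : |(-(121/200):ℝ)| = 121/200 := by rw [abs_neg, abs_of_nonneg] ; norm_num
  rw [habs, abs_le] at h
  norm_num [Finset.sum_range_succ, Nat.factorial] at h
  constructor <;> linarith [h.1, h.2]

lemma bB : (1073893/2500000 : ℝ) ≤ Real.exp (-(169/200)) ∧
    Real.exp (-(169/200)) ≤ (2147787/5000000 : ℝ) := by
  have h := Real.exp_bound (x := (-(169/200):ℝ)) (by rw [abs_le]; constructor <;> norm_num)
    (n := 10) (by norm_num)
  have habs : |(-(169/200):ℝ)| = 169/200 := by rw [abs_neg, abs_of_nonneg] ; norm_num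
  rw [habs, abs_le] at h
  norm_num [Finset.sum_range_succ, Nat.factorial] at h
  constructor <;> linarith [h.1, h.2]

lemma bC : (1876553/5000000 : ℝ) ≤ Real.exp (-(49/50)) ∧
    Real.exp (-(49/50)) ≤ (469139/1250000 : ℝ) := by
  have h := Real.exp_bound (x := (-(49/50):ℝ)) (by rw [abs_le]; constructor <;> norm_num)
    (n := 10) (by norm_num)
  have habs : |(-(49/50):ℝ)| = 49/50 := by rw [abs_neg, abs_of_nonneg] ; norm_num
  rw [habs, abs_le] at h
  norm_num [Finset.sum_range_succ, Nat.factorial] at h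
  constructor <;> linarith [h.1, h.2]

lemma bD : (919697/2500000 : ℝ) ≤ Real.exp (-(1/1)) ∧
    Real.exp (-(1/1)) ≤ (735759/2000000 : ℝ) := by
  have h := Real.exp_bound (x := (-(1/1):ℝ)) (by rw [abs_le]; constructor <;> norm_num)
    (n := 10) (by norm_num)
  have habs : |(-(1/1):ℝ)| = 1/1 := by rw [abs_neg, abs_of_nonneg] ; norm_num
  rw [habs, abs_le] at h
  norm_num [Finset.sum_range_succ, Nat.factorial] at h
  constructor <;> linarith [h.1, h.2]

lemma bEh : (5911857/10000000 : ℝ) ≤ Real.exp (-(841/1600)) ∧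
    Real.exp (-(841/1600)) ≤ (2955929/5000000 : ℝ) := by
  have h := Real.exp_bound (x := (-(841/1600):ℝ)) (by rw [abs_le]; constructor <;> norm_num)
    (n := 10) (by norm_num)
  have habs : |(-(841/1600):ℝ)| = 841/1600 := by rw [abs_neg, abs_of_nonneg] ; norm_num
  rw [habs, abs_le] at h
  norm_num [Finset.sum_range_succ, Nat.factorial] at h
  constructor <;> linarith [h.1, h.2]

lemma bF1h : (1318231/2500000 : ℝ) ≤ Real.exp (-(16/25)) ∧
    Real.exp (-(16/25)) ≤ (210917/400000 : ℝ) := by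
  have h := Real.exp_bound (x := (-(16/25):ℝ)) (by rw [abs_le]; constructor <;> norm_num)
    (n := 10) (by norm_num)
  have habs : |(-(16/25):ℝ)| = 16/25 := by rw [abs_neg, abs_of_nonneg] ; norm_num
  rw [habs, abs_le] at h
  norm_num [Finset.sum_range_succ, Nat.factorial] at h
  constructor <;> linarith [h.1, h.2]

lemma bF2h : (4055543/10000000 : ℝ) ≤ Real.exp (-(361/400)) ∧
    Real.exp (-(361/400)) ≤ (2027773/5000000 : ℝ) := by
  have h := Real.exp_bound (x := (-(361/400):ℝ)) (by rw [abs_le]; constructor <;> norm_num)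
    (n := 10) (by norm_num)
  have habs : |(-(361/400):ℝ)| = 361/400 := by rw [abs_neg, abs_of_nonneg] ; norm_num
  rw [habs, abs_le] at h
  norm_num [Finset.sum_range_succ, Nat.factorial] at h
  constructor <;> linarith [h.1, h.2]

lemma bF4h : (4578333/10000000 : ℝ) ≤ Real.exp (-(25/32)) ∧
    Real.exp (-(25/32)) ≤ (2289167/5000000 : ℝ) := by
  have h := Real.exp_bound (x := (-(25/32):ℝ)) (by rw [abs_le]; constructor <;> norm_num)
    (n := 10) (by norm_num)
  have habs : |(-(25/32):ℝ)| = 25/32 := by rw [abs_neg, abs_of_nonneg] ; norm_num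
  rw [habs, abs_le] at h
  norm_num [Finset.sum_range_succ, Nat.factorial] at h
  constructor <;> linarith [h.1, h.2]

lemma bTh : (5804763/10000000 : ℝ) ≤ Real.exp (-(3481/6400)) ∧
    Real.exp (-(3481/6400)) ≤ (1451191/2500000 : ℝ) := by
  have h := Real.exp_bound (x := (-(3481/6400):ℝ)) (by rw [abs_le]; constructor <;> norm_num)
    (n := 10) (by norm_num)
  have habs : |(-(3481/6400):ℝ)| = 3481/6400 := by rw [abs_neg, abs_of_nonneg] ; norm_num
  rw [habs, abs_le] at h
  norm_num [Finset.sum_range_succ, Nat.factorial] at h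
  constructor <;> linarith [h.1, h.2]

lemma E_lb : ((5911857/10000000:ℝ))^2 ≤ Real.exp (-(841/800)) := by
  have h := exp_sq (x := (-(841/1600):ℝ)) (by norm_num) bEh.1 bEh.2
  rw [show (2:ℝ)*(-(841/1600)) = -(841/800) by norm_num] at h
  exact h.1

lemma F1_ub : Real.exp (-(32/25)) ≤ (210917/400000:ℝ)^2 := by
  have h := exp_sq (x := (-(16/25):ℝ)) (by norm_num) bF1h.1 bF1h.2
  rw [show (2:ℝ)*(-(16/25)) = -(32/25) by norm_num] at h
  exact h.2

lemma F2_ub : Real.exp (-(361/200)) ≤ (2027773/5000000:ℝ)^2 := by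
  have h := exp_sq (x := (-(361/400):ℝ)) (by norm_num) bF2h.1 bF2h.2
  rw [show (2:ℝ)*(-(361/400)) = -(361/200) by norm_num] at h
  exact h.2

lemma F3_ub : Real.exp (-(121/50)) ≤ ((1092149/2000000:ℝ)^2)^2 := by
  have h1 := exp_sq (x := (-(121/200):ℝ)) (by norm_num) bA.1 bA.2
  rw [show (2:ℝ)*(-(121/200)) = -(121/100) by norm_num] at h1
  have h2 := exp_sq (x := (-(121/100):ℝ)) (by positivity) h1.1 h1.2
  rw [show (2:ℝ)*(-(121/100)) = -(121/50) by norm_num] at h2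
  exact h2.2

lemma F4_ub : Real.exp (-(25/8)) ≤ ((2289167/5000000:ℝ)^2)^2 := by
  have h1 := exp_sq (x := (-(25/32):ℝ)) (by norm_num) bF4h.1 bF4h.2
  rw [show (2:ℝ)*(-(25/32)) = -(25/16) by norm_num] at h1
  have h2 := exp_sq (x := (-(25/16):ℝ)) (by positivity) h1.1 h1.2
  rw [show (2:ℝ)*(-(25/16)) = -(25/8) by norm_num] at h2
  exact h2.2

lemma F5_ub : Real.exp (-(98/25)) ≤ ((469139/1250000:ℝ)^2)^2 := by
  have h1 := exp_sq (x := (-(49/50):ℝ)) (by norm_num) bC.1 bC.2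
  rw [show (2:ℝ)*(-(49/50)) = -(49/25) by norm_num] at h1
  have h2 := exp_sq (x := (-(49/25):ℝ)) (by positivity) h1.1 h1.2
  rw [show (2:ℝ)*(-(49/25)) = -(98/25) by norm_num] at h2
  exact h2.2

lemma Tail_ub : Real.exp (-(3481/800)) ≤ (((1451191/2500000:ℝ)^2)^2)^2 := by
  have h1 := exp_sq (x := (-(3481/6400):ℝ)) (by norm_num) bTh.1 bTh.2
  rw [show (2:ℝ)*(-(3481/6400)) = -(3481/3200) by norm_num] at h1
  have h2 := exp_sq (x := (-(3481/3200):ℝ)) (by positivity) h1.1 h1.2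
  rw [show (2:ℝ)*(-(3481/3200)) = -(3481/1600) by norm_num] at h2
  have h3 := exp_sq (x := (-(3481/1600):ℝ)) (by positivity) h2.1 h2.2
  rw [show (2:ℝ)*(-(3481/1600)) = -(3481/800) by norm_num] at h3
  exact h3.2

lemma Gval (x q : ℝ) (hx : -x^2/2 = q) : G x = Real.exp q := by rw [G, hx]

lemma bD' : Real.exp (-(1:ℝ)) ≤ (735759/2000000 : ℝ) := by
  rw [show (-(1:ℝ)) = -(1/1) by norm_num]; exact bD.2

lemma sqrt2_pos : (0:ℝ) < Real.sqrt 2 := Real.sqrt_pos.2 (by norm_num)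

lemma one_le_sqrt2 : (1:ℝ) ≤ Real.sqrt 2 := le_trans (by norm_num) sqrt2_lb

lemma J_lb : (2000556/10^7 : ℝ) ≤ ∫ u in (1:ℝ)..(Real.sqrt 2), G u := by
  have h75 : (7/5:ℝ) ≤ Real.sqrt 2 := le_trans (by norm_num) sqrt2_lb
  have split2 : (∫ u in (6/5:ℝ)..(7/5:ℝ), G u) + (∫ u in (7/5:ℝ)..(Real.sqrt 2), G u)
      = ∫ u in (6/5:ℝ)..(Real.sqrt 2), G u :=
    intervalIntegral.integral_add_adjacent_intervals (contG.intervalIntegrable _ _)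
      (contG.intervalIntegrable _ _)
  have split1 : (∫ u in (1:ℝ)..(6/5:ℝ), G u) + (∫ u in (6/5:ℝ)..(Real.sqrt 2), G u)
      = ∫ u in (1:ℝ)..(Real.sqrt 2), G u :=
    intervalIntegral.integral_add_adjacent_intervals (contG.intervalIntegrable _ _)
      (contG.intervalIntegrable _ _)
  have p1 : (682593/1250000:ℝ) * (599/3000) ≤ ∫ u in (1:ℝ)..(6/5:ℝ), G u := by
    have hm := mid_lb (m := 11/10) (d := 1/10) (by norm_num) (by norm_num) (by norm_num) (by norm_num)
    rw [show (11/10 - 1/10:ℝ) = 1 by norm_num, show (11/10 + 1/10:ℝ) = 6/5 by norm_num] at hm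
    have hG : G (11/10) = Real.exp (-(121/200)) := Gval _ _ (by norm_num)
    rw [hG] at hm
    refine le_trans ?_ hm
    rw [show (2*(1/10:ℝ) - (1/10)^3/3) = 599/3000 by norm_num]
    exact mul_le_mul_of_nonneg_right bA.1 (by norm_num)
  have p2 : (1073893/2500000:ℝ) * (599/3000) ≤ ∫ u in (6/5:ℝ)..(7/5:ℝ), G u := by
    have hm := mid_lb (m := 13/10) (d := 1/10) (by norm_num) (by norm_num) (by norm_num) (by norm_num)
    rw [show (13/10 - 1/10:ℝ) = 6/5 by norm_num, show (13/10 + 1/10:ℝ) = 7/5 by norm_num] at hm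
    have hG : G (13/10) = Real.exp (-(169/200)) := Gval _ _ (by norm_num)
    rw [hG] at hm
    refine le_trans ?_ hm
    rw [show (2*(1/10:ℝ) - (1/10)^3/3) = 599/3000 by norm_num]
    exact mul_le_mul_of_nonneg_right bB.1 (by norm_num)
  have p3 : ((1876553/5000000:ℝ) - 735759/2000000) / (141422/100000)
      ≤ ∫ u in (7/5:ℝ)..(Real.sqrt 2), G u := by
    have hlb := int_G_lb (a := 7/5) (b := Real.sqrt 2) (by norm_num) h75
    refine le_trans ?_ hlb
    have hG7 : G (7/5) = Real.exp (-(49/50)) := Gval _ _ (by norm_num)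
    rw [hG7, G_sqrt2]
    have hnum : (1876553/5000000:ℝ) - 735759/2000000
        ≤ Real.exp (-(49/50)) - Real.exp (-1) := by
      have h1 := bC.1; have h2 := bD'
      linarith
    calc ((1876553/5000000:ℝ) - 735759/2000000) / (141422/100000)
        ≤ ((1876553/5000000:ℝ) - 735759/2000000) / Real.sqrt 2 :=
          div_le_div_of_nonneg_left (by norm_num) sqrt2_pos sqrt2_ub
      _ ≤ (Real.exp (-(49/50)) - Real.exp (-1)) / Real.sqrt 2 :=
          (div_le_div_iff_of_pos_right sqrt2_pos).2 hnum
  rw [← split1, ← split2]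
  have hfin : (2000556/10^7:ℝ) ≤ 682593/1250000*(599/3000) + (1073893/2500000*(599/3000)
      + (1876553/5000000 - 735759/2000000)/(141422/100000)) := by norm_num
  linarith

lemma T2_ub : T (Real.sqrt 2) ≤ (1983804/10^7 : ℝ) := by
  have h145 : Real.sqrt 2 ≤ 29/20 := le_trans sqrt2_ub (by norm_num)
  have hs1 : T (Real.sqrt 2) = (∫ u in (Real.sqrt 2)..(29/20:ℝ), G u) + T (29/20) := by
    rw [← T_split h145]
  have hs2 : T (29/20) = (∫ u in (29/20:ℝ)..(59/20:ℝ), G u) + T (59/20) := by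
    rw [← T_split (by norm_num : (29/20:ℝ) ≤ 59/20)]
  have htail : T (59/20) ≤ (((1451191/2500000:ℝ)^2)^2)^2 / (59/20) := by
    have hmi := T_mills (x := 59/20) (by norm_num)
    have hG : G (59/20) = Real.exp (-(3481/800)) := Gval _ _ (by norm_num)
    rw [hG] at hmi
    rw [le_div_iff₀ (by norm_num : (0:ℝ) < 59/20)]
    nlinarith [Tail_ub]
  have p0 : (∫ u in (Real.sqrt 2)..(29/20:ℝ), G u)
      ≤ ((735759/2000000:ℝ) - (5911857/10000000:ℝ)^2) / (14142/10000) := by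
    have hub := int_G_ub (a := Real.sqrt 2) (b := 29/20) sqrt2_pos h145
    refine le_trans hub ?_
    rw [G_sqrt2]
    have hG : G (29/20) = Real.exp (-(841/800)) := Gval _ _ (by norm_num)
    rw [hG]
    have hnn : (0:ℝ) ≤ Real.exp (-1) - Real.exp (-(841/800)) := by
      have := Real.exp_le_exp.2 (show (-(841/800):ℝ) ≤ -1 by norm_num); linarith
    calc (Real.exp (-1) - Real.exp (-(841/800))) / Real.sqrt 2
        ≤ (Real.exp (-1) - Real.exp (-(841/800))) / (14142/10000) :=
          div_le_div_of_nonneg_left hnn (by norm_num) sqrt2_lb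
      _ ≤ ((735759/2000000:ℝ) - (5911857/10000000:ℝ)^2) / (14142/10000) := by
          have h1 := bD'; have h2 := E_lb
          apply (div_le_div_iff_of_pos_right (by norm_num : (0:ℝ) < 14142/10000)).2
          linarith
  have q1 : (∫ u in (29/20:ℝ)..(7/4:ℝ), G u) ≤ (210917/400000:ℝ)^2 * (2*(3/20) + (8/5)^2*(3/20)^3/3 + (8/5)^4*(3/20)^5/48) := by
    have hmu := mid_ub (m := 8/5) (d := 3/20) (by norm_num) (by norm_num) (by norm_num)
    rw [show (8/5 - 3/20:ℝ) = 29/20 by norm_num, show (8/5 + 3/20:ℝ) = 7/4 by norm_num] at hmu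
    have hG : G (8/5) = Real.exp (-(32/25)) := Gval _ _ (by norm_num)
    rw [hG] at hmu
    exact le_trans hmu (mul_le_mul_of_nonneg_right F1_ub (by norm_num))
  have q2 : (∫ u in (7/4:ℝ)..(41/20:ℝ), G u) ≤ (2027773/5000000:ℝ)^2 * (2*(3/20) + (19/10)^2*(3/20)^3/3 + (19/10)^4*(3/20)^5/48) := by
    have hmu := mid_ub (m := 19/10) (d := 3/20) (by norm_num) (by norm_num) (by norm_num)
    rw [show (19/10 - 3/20:ℝ) = 7/4 by norm_num, show (19/10 + 3/20:ℝ) = 41/20 by norm_num] at hmu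
    have hG : G (19/10) = Real.exp (-(361/200)) := Gval _ _ (by norm_num)
    rw [hG] at hmu
    exact le_trans hmu (mul_le_mul_of_nonneg_right F2_ub (by norm_num))
  have q3 : (∫ u in (41/20:ℝ)..(47/20:ℝ), G u) ≤ ((1092149/2000000:ℝ)^2)^2 * (2*(3/20) + (11/5)^2*(3/20)^3/3 + (11/5)^4*(3/20)^5/48) := by
    have hmu := mid_ub (m := 11/5) (d := 3/20) (by norm_num) (by norm_num) (by norm_num)
    rw [show (11/5 - 3/20:ℝ) = 41/20 by norm_num, show (11/5 + 3/20:ℝ) = 47/20 by norm_num] at hmu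
    have hG : G (11/5) = Real.exp (-(121/50)) := Gval _ _ (by norm_num)
    rw [hG] at hmu
    exact le_trans hmu (mul_le_mul_of_nonneg_right F3_ub (by norm_num))
  have q4 : (∫ u in (47/20:ℝ)..(53/20:ℝ), G u) ≤ ((2289167/5000000:ℝ)^2)^2 * (2*(3/20) + (5/2)^2*(3/20)^3/3 + (5/2)^4*(3/20)^5/48) := by
    have hmu := mid_ub (m := 5/2) (d := 3/20) (by norm_num) (by norm_num) (by norm_num)
    rw [show (5/2 - 3/20:ℝ) = 47/20 by norm_num, show (5/2 + 3/20:ℝ) = 53/20 by norm_num] at hmu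
    have hG : G (5/2) = Real.exp (-(25/8)) := Gval _ _ (by norm_num)
    rw [hG] at hmu
    exact le_trans hmu (mul_le_mul_of_nonneg_right F4_ub (by norm_num))
  have q5 : (∫ u in (53/20:ℝ)..(59/20:ℝ), G u) ≤ ((469139/1250000:ℝ)^2)^2 * (2*(3/20) + (14/5)^2*(3/20)^3/3 + (14/5)^4*(3/20)^5/48) := by
    have hmu := mid_ub (m := 14/5) (d := 3/20) (by norm_num) (by norm_num) (by norm_num)
    rw [show (14/5 - 3/20:ℝ) = 53/20 by norm_num, show (14/5 + 3/20:ℝ) = 59/20 by norm_num] at hmu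
    have hG : G (14/5) = Real.exp (-(98/25)) := Gval _ _ (by norm_num)
    rw [hG] at hmu
    exact le_trans hmu (mul_le_mul_of_nonneg_right F5_ub (by norm_num))
  have hmid : (∫ u in (29/20:ℝ)..(59/20:ℝ), G u)
      = (∫ u in (29/20:ℝ)..(7/4:ℝ), G u) + ((∫ u in (7/4:ℝ)..(41/20:ℝ), G u)
        + ((∫ u in (41/20:ℝ)..(47/20:ℝ), G u) + ((∫ u in (47/20:ℝ)..(53/20:ℝ), G u)
        + (∫ u in (53/20:ℝ)..(59/20:ℝ), G u)))) := by
    rw [intervalIntegral.integral_add_adjacent_intervals (contG.intervalIntegrable _ _)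
      (contG.intervalIntegrable _ _),
      intervalIntegral.integral_add_adjacent_intervals (contG.intervalIntegrable _ _)
      (contG.intervalIntegrable _ _),
      intervalIntegral.integral_add_adjacent_intervals (contG.intervalIntegrable _ _)
      (contG.intervalIntegrable _ _),
      intervalIntegral.integral_add_adjacent_intervals (contG.intervalIntegrable _ _)
      (contG.intervalIntegrable _ _)]
  have hfin : ((735759/2000000:ℝ) - (5911857/10000000:ℝ)^2) / (14142/10000)
      + ((210917/400000:ℝ)^2 * (2*(3/20) + (8/5)^2*(3/20)^3/3 + (8/5)^4*(3/20)^5/48)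
      + ((2027773/5000000:ℝ)^2 * (2*(3/20) + (19/10)^2*(3/20)^3/3 + (19/10)^4*(3/20)^5/48)
      + (((1092149/2000000:ℝ)^2)^2 * (2*(3/20) + (11/5)^2*(3/20)^3/3 + (11/5)^4*(3/20)^5/48)
      + (((2289167/5000000:ℝ)^2)^2 * (2*(3/20) + (5/2)^2*(3/20)^3/3 + (5/2)^4*(3/20)^5/48)
      + (((469139/1250000:ℝ)^2)^2 * (2*(3/20) + (14/5)^2*(3/20)^3/3 + (14/5)^4*(3/20)^5/48)
      + (((1451191/2500000:ℝ)^2)^2)^2 / (59/20))))))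
      ≤ (1983804/10^7 : ℝ) := by norm_num
  rw [hs1, hs2, hmid]
  linarith

lemma c2_pos : 0 < c2 := by
  rw [c2, c1]
  have h2 := Phibar_pos (Real.sqrt 2)
  have h3 := mills_pos (Real.sqrt 3)
  have h4 : 0 < 1/(4*Phibar (Real.sqrt 2)) := by positivity
  nlinarith

lemma hp_eq {x : ℝ} (hx : x ≠ 0) : h x / p x = 2*c2*(x^2*Phibar x) := by
  rw [h, p]
  field_simp

lemma w_deriv (x : ℝ) : HasDerivAt (fun y => 2*c2*(y^2*Phibar y))
    (2*c2*(2*x*Phibar x - x^2*phi x)) x := by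
  have h1 := ((hasDerivAt_pow 2 x).fun_mul (hasDerivAt_Phibar x)).const_mul (2*c2)
  refine h1.congr_deriv ?_
  push_cast; ring

lemma w1_deriv (x : ℝ) : HasDerivAt (fun y => 2*c2*(2*y*Phibar y - y^2*phi y))
    (2*c2*(2*Phibar x - 4*x*phi x + x^3*phi x)) x := by
  have ha := ((hasDerivAt_id x).const_mul 2).fun_mul (hasDerivAt_Phibar x)
  have hb := (hasDerivAt_pow 2 x).fun_mul (hasDerivAt_phi x)
  have hc := (ha.fun_sub hb).const_mul (2*c2)
  simp only [id_eq] at hc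
  refine hc.congr_deriv ?_
  push_cast; ring

lemma w1_nonpos {x : ℝ} (h1 : 1 < x) (h2 : x < Real.sqrt 2) :
    2*c2*(2*Phibar x - 4*x*phi x + x^3*phi x) ≤ 0 := by
  have hx0 : (0:ℝ) < x := by linarith
  have hA := Phibar_mills hx0
  have hφ := phi_pos x
  have hΦ := Phibar_pos x
  have hx2 : x^2 ≤ 2 := by
    nlinarith [Real.sq_sqrt (by norm_num : (2:ℝ) ≥ 0), sqrt2_pos]
  have hx1 : 1 ≤ x^2 := by nlinarith
  have hs : 2*Phibar x - 4*x*phi x + x^3*phi x ≤ 0 := by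
    nlinarith [mul_nonneg (sub_nonneg.2 hx1) (sub_nonneg.2 hx2), mul_pos hx0 hφ,
      mul_le_mul_of_nonneg_left hA (le_of_lt two_pos)]
  have hc2 := c2_pos
  nlinarith

lemma concave_w : ConcaveOn ℝ (Icc 1 (Real.sqrt 2)) (fun y => 2*c2*(y^2*Phibar y)) := by
  have hderiv : deriv (fun y => 2*c2*(y^2*Phibar y))
      = fun x => 2*c2*(2*x*Phibar x - x^2*phi x) :=
    funext fun x => (w_deriv x).deriv
  have hderiv1 : deriv (fun y => 2*c2*(2*y*Phibar y - y^2*phi y))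
      = fun x => 2*c2*(2*Phibar x - 4*x*phi x + x^3*phi x) :=
    funext fun x => (w1_deriv x).deriv
  apply AntitoneOn.concaveOn_of_deriv (convex_Icc _ _)
  · exact Continuous.continuousOn
      (Differentiable.continuous (fun x => (w_deriv x).differentiableAt))
  · intro x _
    exact (w_deriv x).differentiableAt.differentiableWithinAt
  · rw [hderiv, interior_Icc]
    have := antitoneOn_of_deriv_nonpos (convex_Ioo (1:ℝ) (Real.sqrt 2))
      (f := fun y => 2*c2*(2*y*Phibar y - y^2*phi y))
      (Continuous.continuousOn
        (Differentiable.continuous (fun x => (w1_deriv x).differentiableAt)))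
      (fun x _ => (w1_deriv x).differentiableAt.differentiableWithinAt)
      ?_
    · exact this
    · intro x hx
      rw [isOpen_Ioo.interior_eq] at hx
      rw [hderiv1]
      exact w1_nonpos hx.1 hx.2

lemma part1 : ∀ x ∈ Icc (1:ℝ) (Real.sqrt 2),
    min (h 1 / p 1) (h (Real.sqrt 2) / p (Real.sqrt 2)) ≤ h x / p x := by
  intro x hx
  have hx0 : x ≠ 0 := by have := hx.1; intro hh; rw [hh] at this; norm_num at this
  have hmem : x ∈ segment ℝ 1 (Real.sqrt 2) := by rwa [segment_eq_Icc one_le_sqrt2]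
  have hcon := concave_w.ge_on_segment (left_mem_Icc.2 one_le_sqrt2)
    (right_mem_Icc.2 one_le_sqrt2) hmem
  rw [hp_eq hx0, hp_eq one_ne_zero, hp_eq (ne_of_gt sqrt2_pos)]
  exact hcon

lemma part2a : h (Real.sqrt 2) / p (Real.sqrt 2) = 1 + (1 + mills (Real.sqrt 3))/250 := by
  rw [hp_eq (ne_of_gt sqrt2_pos), sq_sqrt2, c2, c1]
  have hP := (Phibar_pos (Real.sqrt 2)).ne'
  field_simp
  ring

lemma part2b : 1 < h 1 / p 1 := by
  have hs := sqrt2pi_pos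
  have hB := T_pos (Real.sqrt 2)
  have hJ := J_lb
  have hU := T2_ub
  have h12 : (1:ℝ) < Real.sqrt 2 := lt_of_lt_of_le (by norm_num) sqrt2_lb
  have hJpos := intG_pos h12
  have hm3 : (433/250:ℝ) ≤ mills (Real.sqrt 3) :=
    le_trans sqrt3_lb (mills_ge (Real.sqrt_pos.2 (by norm_num)))
  have hkey : 61817 * T (Real.sqrt 2) < 63183 * ∫ u in (1:ℝ)..(Real.sqrt 2), G u := by
    nlinarith
  have e : ∀ a b m s : ℝ, b ≠ 0 → s ≠ 0 →
      2*(1/(4*(b/s))*(1+(1+m)/250))*(1^2*(a/s)) = a*(250+(1+m))/(500*b) := by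
    intro a b m s hb hs
    field_simp
    ring
  rw [hp_eq one_ne_zero, c2, c1, Phibar_eq, Phibar_eq,
    e _ _ _ _ (ne_of_gt hB) (ne_of_gt hs), T_split one_le_sqrt2,
    lt_div_iff₀ (by positivity)]
  nlinarith [mul_le_mul_of_nonneg_left hm3
    (le_of_lt (show (0:ℝ) < (∫ u in (1:ℝ)..(Real.sqrt 2), G u) + T (Real.sqrt 2) by positivity))]

theorem h_over_p :
    (∀ x ∈ Set.Icc (1 : ℝ) (Real.sqrt 2),
        min (h 1 / p 1) (h (Real.sqrt 2) / p (Real.sqrt 2)) ≤ h x / p x)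
    ∧ 1 < min (h 1 / p 1) (h (Real.sqrt 2) / p (Real.sqrt 2))
    ∧ ∀ x ∈ Set.Ioo (1 : ℝ) (Real.sqrt 2), p x < h x := by
  have hmin : 1 < min (h 1 / p 1) (h (Real.sqrt 2) / p (Real.sqrt 2)) := by
    apply lt_min part2b
    rw [part2a]
    have := mills_pos (Real.sqrt 3)
    linarith
  refine ⟨part1, hmin, ?_⟩
  intro x hx
  have hx1 : 1 < x := hx.1
  have hpx : 0 < p x := by rw [p]; positivity
  have hgt : 1 < h x / p x :=
    lt_of_lt_of_le hmin (part1 x ⟨le_of_lt hx.1, le_of_lt hx.2⟩)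
  exact (one_lt_div hpx).1 hgt
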